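/- For every pair of distinct vertices x, y of G, the function h(α) = κ_α(x,y)/(1−α) is nondecreasing on [0,1) and bounded above by 2/d(x,y); consequently the limit lim_{α→1⁻} κ_α(x,y)/(1−α) exists and is at most 2/d(x,y). -/

import Mathlib

open Finset Filter Topology

noncomputable section

/-- A coupling between two (probability) mass functions `μ` and `ν` on a finite
vertex set: a matrix with values in `[0,1]` whose row sums are `μ` and whose
column sums are `ν`. -/
def IsCoupling {V : Type*} [Fintype V] (A : V → V → ℝ) (μ ν : V → ℝ) : Prop :=
  (∀ x y, 0 ≤ A x y ∧ A x y ≤ 1) ∧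
  (∀ x, ∑ y, A x y = μ x) ∧
  (∀ y, ∑ x, A x y = ν y)

/-- The (1-)Wasserstein distance between two mass functions on the vertex set of a
graph, with respect to the graph distance. -/
def Wass {V : Type*} [Fintype V] (G : SimpleGraph V) (μ ν : V → ℝ) : ℝ :=
  sInf {c | ∃ A : V → V → ℝ, IsCoupling A μ ν ∧
    c = ∑ x, ∑ y, A x y * (G.dist x y : ℝ)}

/-- The probability measure `m_x^α`: mass `α` at `x`, mass `(1-α)/d_x` at each
neighbor of `x`, and `0` elsewhere. -/
def mMeas {V : Type*} [Fintype V] [DecidableEq V] (G : SimpleGraph V)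
    [DecidableRel G.Adj] (α : ℝ) (x : V) : V → ℝ :=
  fun z => if z = x then α else if G.Adj x z then (1 - α) / (G.degree x : ℝ) else 0

/-- The `α`-Ricci curvature `κ_α(x,y) = 1 - W(m_x^α, m_y^α)/d(x,y)`. -/
def kappaAlpha {V : Type*} [Fintype V] [DecidableEq V] (G : SimpleGraph V)
    [DecidableRel G.Adj] (α : ℝ) (x y : V) : ℝ :=
  1 - Wass G (mMeas G α x) (mMeas G α y) / (G.dist x y : ℝ)

/-- The Lin–Lu–Yau Ricci curvature `κ(x,y) = lim_{α→1⁻} κ_α(x,y)/(1-α)`. -/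
def kappa {V : Type*} [Fintype V] [DecidableEq V] (G : SimpleGraph V)
    [DecidableRel G.Adj] (x y : V) : ℝ :=
  limUnder (𝓝[<] (1 : ℝ)) (fun α => kappaAlpha G α x y / (1 - α))

/-- The (non-normalized) graph Laplacian `(Δf)(x) = d_x f(x) - ∑_{y ~ x} f(y)`. -/
def lap {V : Type*} [Fintype V] [DecidableEq V] (G : SimpleGraph V)
    [DecidableRel G.Adj] (f : V → ℝ) (x : V) : ℝ :=
  (G.degree x : ℝ) * f x - ∑ y ∈ G.neighborFinset x, f y

end

set_option linter.unusedSectionVars false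

section myaux

variable {V : Type*} [Fintype V] [DecidableEq V] (G : SimpleGraph V) [DecidableRel G.Adj]

lemma my_degree_pos (hconn : G.Connected) (hcard : 1 < Fintype.card V) (v : V) :
    0 < G.degree v := by
  obtain ⟨w, hw⟩ := Fintype.exists_ne_of_one_lt_card hcard v
  obtain ⟨p⟩ := hconn.preconnected v w
  cases p with
  | nil => exact (hw rfl).elim
  | cons h q => exact (G.degree_pos_iff_exists_adj v).mpr ⟨_, h⟩

lemma mMeas_eq (α : ℝ) (x z : V) :
    mMeas G α x z = (if z = x then α else 0)
      + (if z ∈ G.neighborFinset x then (1 - α) / (G.degree x : ℝ) else 0) := by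
  by_cases h : z = x
  · subst h; simp [mMeas]
  · simp [mMeas, h, SimpleGraph.mem_neighborFinset]

lemma sum_mul_mMeas (α : ℝ) (x : V) (g : V → ℝ) :
    ∑ u, g u * mMeas G α x u
      = g x * α + ∑ u ∈ G.neighborFinset x, g u * ((1 - α) / (G.degree x : ℝ)) := by
  simp only [mMeas_eq, mul_add, Finset.sum_add_distrib]
  congr 1
  · simp
  · simp only [mul_ite, mul_zero, Finset.sum_ite_mem, Finset.univ_inter]

lemma mMeas_sum (α : ℝ) (x : V) (hd : 0 < G.degree x) : ∑ z, mMeas G α x z = 1 := by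
  have h := sum_mul_mMeas G α x (fun _ => 1)
  simp only [one_mul, Finset.sum_const, SimpleGraph.card_neighborFinset_eq_degree,
    nsmul_eq_mul] at h
  have hd' : (G.degree x : ℝ) ≠ 0 := Nat.cast_ne_zero.mpr hd.ne'
  rw [h]
  field_simp
  ring

lemma mMeas_nonneg {α : ℝ} (h0 : 0 ≤ α) (h1 : α ≤ 1) (x z : V) : 0 ≤ mMeas G α x z := by
  unfold mMeas
  split_ifs
  · exact h0
  · exact div_nonneg (by linarith) (by positivity)
  · exact le_refl 0

lemma mMeas_le_one {α : ℝ} (h0 : 0 ≤ α) (h1 : α ≤ 1) (x : V) (hd : 0 < G.degree x) (z : V) :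
    mMeas G α x z ≤ 1 := by
  have hd' : (1:ℝ) ≤ (G.degree x : ℝ) := by exact_mod_cast hd
  unfold mMeas
  split_ifs
  · exact h1
  · rw [div_le_one (by linarith)]; linarith
  · norm_num

lemma exists_coupling {W : Type*} [Fintype W] (μ ν : W → ℝ) (hμ0 : ∀ z, 0 ≤ μ z) (hμ1 : ∀ z, μ z ≤ 1)
    (hν0 : ∀ z, 0 ≤ ν z) (hν1 : ∀ z, ν z ≤ 1)
    (hμs : ∑ z, μ z = 1) (hνs : ∑ z, ν z = 1) :
    IsCoupling (fun u v => μ u * ν v) μ ν := by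
  refine ⟨fun u v => ⟨mul_nonneg (hμ0 u) (hν0 v), ?_⟩, fun u => ?_, fun v => ?_⟩
  · calc μ u * ν v ≤ 1 * 1 := mul_le_mul (hμ1 u) (hν1 v) (hν0 v) one_pos.le
      _ = 1 := one_mul 1
  · rw [← Finset.mul_sum, hνs, mul_one]
  · rw [← Finset.sum_mul, hμs, one_mul]

lemma cost_lb (hconn : G.Connected) (hcard : 1 < Fintype.card V)
    {α : ℝ} (h0 : 0 ≤ α) (h1 : α ≤ 1) (x y : V)
    (A : V → V → ℝ) (hA : IsCoupling A (mMeas G α x) (mMeas G α y)) :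
    (G.dist x y : ℝ) - 2 * (1 - α) ≤ ∑ u, ∑ v, A u v * (G.dist u v : ℝ) := by
  obtain ⟨hA01, hrow, hcol⟩ := hA
  have hdx := my_degree_pos G hconn hcard x
  have hdy := my_degree_pos G hconn hcard y
  have hdx' : (G.degree x : ℝ) ≠ 0 := Nat.cast_ne_zero.mpr hdx.ne'
  have hdy' : (G.degree y : ℝ) ≠ 0 := Nat.cast_ne_zero.mpr hdy.ne'
  set f : V → ℝ := fun u => (G.dist u y : ℝ) with hf
  have step1 : ∑ u, ∑ v, A u v * (f u - f v) ≤ ∑ u, ∑ v, A u v * (G.dist u v : ℝ) := by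
    refine Finset.sum_le_sum fun u _ => Finset.sum_le_sum fun v _ => ?_
    refine mul_le_mul_of_nonneg_left ?_ (hA01 u v).1
    have h2 : (G.dist u y : ℝ) ≤ (G.dist u v : ℝ) + (G.dist v y : ℝ) := by
      exact_mod_cast hconn.dist_triangle (u := u) (v := v) (w := y)
    simp only [hf]
    linarith
  have step2 : ∑ u, ∑ v, A u v * (f u - f v)
      = ∑ u, f u * mMeas G α x u - ∑ v, f v * mMeas G α y v := by
    simp only [mul_sub, Finset.sum_sub_distrib]
    congr 1
    · refine Finset.sum_congr rfl fun u _ => ?_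
      rw [← Finset.sum_mul, hrow u, mul_comm]
    · rw [Finset.sum_comm]
      refine Finset.sum_congr rfl fun v _ => ?_
      rw [← Finset.sum_mul, hcol v, mul_comm]
  have hx : α * (G.dist x y : ℝ) + (1 - α) * ((G.dist x y : ℝ) - 1)
      ≤ ∑ u, f u * mMeas G α x u := by
    rw [sum_mul_mMeas]
    have hfx : f x = (G.dist x y : ℝ) := rfl
    have hbd : ∀ u ∈ G.neighborFinset x,
        ((G.dist x y : ℝ) - 1) * ((1 - α) / (G.degree x : ℝ))
          ≤ f u * ((1 - α) / (G.degree x : ℝ)) := by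
      intro u hu
      have hadj : G.Adj x u := (SimpleGraph.mem_neighborFinset G x u).mp hu
      have h3 : G.dist x y ≤ G.dist x u + G.dist u y := hconn.dist_triangle
      have h4 : G.dist x u = 1 := (SimpleGraph.dist_eq_one_iff_adj).mpr hadj
      have h5 : (G.dist x y : ℝ) - 1 ≤ f u := by
        rw [h4] at h3
        have : (G.dist x y : ℝ) ≤ 1 + (G.dist u y : ℝ) := by exact_mod_cast h3
        simp only [hf]; linarith
      exact mul_le_mul_of_nonneg_right h5 (div_nonneg (by linarith) (by positivity))
    have := Finset.sum_le_sum hbd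
    rw [Finset.sum_const, SimpleGraph.card_neighborFinset_eq_degree, nsmul_eq_mul] at this
    have heq : (G.degree x : ℝ) * (((G.dist x y : ℝ) - 1) * ((1 - α) / (G.degree x : ℝ)))
        = (1 - α) * ((G.dist x y : ℝ) - 1) := by field_simp
    rw [heq] at this
    rw [hfx]
    linarith
  have hy : ∑ v, f v * mMeas G α y v ≤ 1 - α := by
    rw [sum_mul_mMeas]
    have hfy : f y = 0 := by
      simp only [hf]
      simp
    have hbd : ∀ v ∈ G.neighborFinset y,
        f v * ((1 - α) / (G.degree y : ℝ)) ≤ 1 * ((1 - α) / (G.degree y : ℝ)) := by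
      intro v hv
      have hadj : G.Adj y v := (SimpleGraph.mem_neighborFinset G y v).mp hv
      have h4 : G.dist v y = 1 := (SimpleGraph.dist_eq_one_iff_adj).mpr hadj.symm
      have h5 : f v ≤ 1 := by simp only [hf, h4]; norm_num
      exact mul_le_mul_of_nonneg_right h5 (div_nonneg (by linarith) (by positivity))
    have := Finset.sum_le_sum hbd
    rw [Finset.sum_const, SimpleGraph.card_neighborFinset_eq_degree, nsmul_eq_mul] at this
    have heq : (G.degree y : ℝ) * (1 * ((1 - α) / (G.degree y : ℝ))) = 1 - α := by
      field_simp
    rw [heq] at this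
    rw [hfy]
    linarith
  calc (G.dist x y : ℝ) - 2 * (1 - α)
      ≤ (α * (G.dist x y : ℝ) + (1 - α) * ((G.dist x y : ℝ) - 1)) - (1 - α) := by
        have hd0 : (0:ℝ) ≤ (G.dist x y : ℝ) := by positivity
        nlinarith
    _ ≤ ∑ u, f u * mMeas G α x u - ∑ v, f v * mMeas G α y v := by linarith
    _ = ∑ u, ∑ v, A u v * (f u - f v) := step2.symm
    _ ≤ ∑ u, ∑ v, A u v * (G.dist u v : ℝ) := step1

def wassSet (μ ν : V → ℝ) : Set ℝ :=
  {c | ∃ A : V → V → ℝ, IsCoupling A μ ν ∧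
    c = ∑ x, ∑ y, A x y * (G.dist x y : ℝ)}

lemma wassSet_nonempty (hconn : G.Connected) (hcard : 1 < Fintype.card V)
    {α : ℝ} (h0 : 0 ≤ α) (h1 : α ≤ 1) (x y : V) :
    (wassSet G (mMeas G α x) (mMeas G α y)).Nonempty := by
  refine ⟨_, fun u v => mMeas G α x u * mMeas G α y v, ?_, rfl⟩
  exact exists_coupling _ _ (mMeas_nonneg G h0 h1 x) (mMeas_le_one G h0 h1 x (my_degree_pos G hconn hcard x))
    (mMeas_nonneg G h0 h1 y) (mMeas_le_one G h0 h1 y (my_degree_pos G hconn hcard y))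
    (mMeas_sum G α x (my_degree_pos G hconn hcard x)) (mMeas_sum G α y (my_degree_pos G hconn hcard y))

lemma wassSet_bddBelow (hconn : G.Connected) (hcard : 1 < Fintype.card V)
    {α : ℝ} (h0 : 0 ≤ α) (h1 : α ≤ 1) (x y : V) :
    BddBelow (wassSet G (mMeas G α x) (mMeas G α y)) := by
  refine ⟨(G.dist x y : ℝ) - 2 * (1 - α), ?_⟩
  rintro c ⟨A, hA, rfl⟩
  exact cost_lb G hconn hcard h0 h1 x y A hA

lemma wass_lb (hconn : G.Connected) (hcard : 1 < Fintype.card V)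
    {α : ℝ} (h0 : 0 ≤ α) (h1 : α ≤ 1) (x y : V) :
    (G.dist x y : ℝ) - 2 * (1 - α) ≤ Wass G (mMeas G α x) (mMeas G α y) := by
  refine le_csInf (wassSet_nonempty G hconn hcard h0 h1 x y) ?_
  rintro c ⟨A, hA, rfl⟩
  exact cost_lb G hconn hcard h0 h1 x y A hA

end myaux

set_option linter.unusedSectionVars false

section mono
variable {V : Type*} [Fintype V] [DecidableEq V] (G : SimpleGraph V) [DecidableRel G.Adj]

lemma wass_mono (hconn : G.Connected) (hcard : 1 < Fintype.card V)
    {a b : ℝ} (h0 : 0 ≤ a) (hab : a ≤ b) (hb : b < 1) (x y : V) :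
    Wass G (mMeas G b x) (mMeas G b y)
      ≤ ((1 - b) / (1 - a)) * Wass G (mMeas G a x) (mMeas G a y)
        + (1 - (1 - b) / (1 - a)) * (G.dist x y : ℝ) := by
  have ha1 : a < 1 := lt_of_le_of_lt hab hb
  have ha1' : (0:ℝ) < 1 - a := by linarith
  have hb1' : (0:ℝ) < 1 - b := by linarith
  set c : ℝ := (1 - b) / (1 - a) with hc
  have hc0 : 0 < c := div_pos hb1' ha1'
  have hc1 : c ≤ 1 := by rw [div_le_one ha1']; linarith
  have hb0 : 0 ≤ b := le_trans h0 hab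
  -- measure identity
  have hmeas : ∀ v z : V, mMeas G b v z
      = c * mMeas G a v z + (1 - c) * (if z = v then 1 else 0) := by
    intro v z
    by_cases hzv : z = v
    · simp only [mMeas, hzv, if_pos rfl, if_true, mul_one]
      rw [hc]
      field_simp
      ring
    · by_cases hadj : G.Adj v z
      · have hdv : (G.degree v : ℝ) ≠ 0 :=
          Nat.cast_ne_zero.mpr ((G.degree_pos_iff_exists_adj v).mpr ⟨z, hadj⟩).ne'
        simp only [mMeas, if_neg hzv, if_pos hadj, if_neg hzv, mul_zero, add_zero]
        rw [hc]
        field_simp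
      · simp [mMeas, hzv, hadj]
  -- transfer couplings
  have key : ∀ s ∈ wassSet G (mMeas G a x) (mMeas G a y),
      Wass G (mMeas G b x) (mMeas G b y) ≤ c * s + (1 - c) * (G.dist x y : ℝ) := by
    rintro s ⟨A, ⟨hA01, hrow, hcol⟩, rfl⟩
    set e : V → V → ℝ := fun u v => (if u = x then 1 else 0) * (if v = y then 1 else 0) with he
    have he01 : ∀ u v, 0 ≤ e u v ∧ e u v ≤ 1 := by
      intro u v; simp only [he]; split_ifs <;> norm_num
    set B : V → V → ℝ := fun u v => c * A u v + (1 - c) * e u v with hB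
    have hBc : IsCoupling B (mMeas G b x) (mMeas G b y) := by
      refine ⟨fun u v => ⟨?_, ?_⟩, fun u => ?_, fun v => ?_⟩
      · exact add_nonneg (mul_nonneg hc0.le (hA01 u v).1)
          (mul_nonneg (by linarith) (he01 u v).1)
      · have h1 := (hA01 u v).2
        have h2 := (he01 u v).2
        simp only [hB]
        nlinarith
      · simp only [hB, he]
        rw [Finset.sum_add_distrib, ← Finset.mul_sum, hrow u, ← Finset.mul_sum,
          ← Finset.mul_sum]
        have : ∑ v, (if v = y then (1:ℝ) else 0) = 1 := by simp
        rw [this, mul_one, hmeas]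
      · simp only [hB, he]
        rw [Finset.sum_add_distrib, ← Finset.mul_sum, hcol v, ← Finset.mul_sum,
          ← Finset.sum_mul]
        have : ∑ u, (if u = x then (1:ℝ) else 0) = 1 := by simp
        rw [this, one_mul, hmeas]
    have hcost : ∑ u, ∑ v, B u v * (G.dist u v : ℝ)
        = c * (∑ u, ∑ v, A u v * (G.dist u v : ℝ)) + (1 - c) * (G.dist x y : ℝ) := by
      simp only [hB, he, add_mul, Finset.sum_add_distrib, mul_assoc, ← Finset.mul_sum]
      congr 1
      have h4 : ∑ i, (if i = x then (1:ℝ) else 0) * ∑ j, (if j = y then (1:ℝ) else 0) * (G.dist i j : ℝ)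
          = (G.dist x y : ℝ) := by
        simp [ite_mul, Finset.sum_ite_eq']
      rw [h4]
    refine csInf_le (wassSet_bddBelow G hconn hcard hb0 hb.le x y) ?_
    exact ⟨B, hBc, hcost.symm⟩
  -- conclude via sInf
  have hne := wassSet_nonempty G hconn hcard h0 ha1.le x y
  have h2 : ∀ s ∈ wassSet G (mMeas G a x) (mMeas G a y),
      (Wass G (mMeas G b x) (mMeas G b y) - (1 - c) * (G.dist x y : ℝ)) / c ≤ s := by
    intro s hs
    rw [div_le_iff₀ hc0]
    have := key s hs
    nlinarith
  have h3 := le_csInf hne h2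
  rw [div_le_iff₀ hc0] at h3
  have : Wass G (mMeas G a x) (mMeas G a y)
      = sInf (wassSet G (mMeas G a x) (mMeas G a y)) := rfl
  rw [← this] at h3
  nlinarith

end mono


theorem stmt10 {V : Type*} [Fintype V] [DecidableEq V]
    (G : SimpleGraph V) [DecidableRel G.Adj]
    (hconn : G.Connected) (hcard : 1 < Fintype.card V)
    (x y : V) (hxy : x ≠ y) :
    (∀ a b : ℝ, 0 ≤ a → a ≤ b → b < 1 →
      kappaAlpha G a x y / (1 - a) ≤ kappaAlpha G b x y / (1 - b)) ∧
    (∀ a : ℝ, 0 ≤ a → a < 1 →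
      kappaAlpha G a x y / (1 - a) ≤ 2 / (G.dist x y : ℝ)) ∧
    (∃ L : ℝ, Filter.Tendsto (fun a => kappaAlpha G a x y / (1 - a)) (𝓝[<] (1 : ℝ)) (𝓝 L) ∧
      L ≤ 2 / (G.dist x y : ℝ)) := by
  have hd : 0 < G.dist x y := hconn.pos_dist_of_ne hxy
  have hdR : (0:ℝ) < (G.dist x y : ℝ) := by exact_mod_cast hd
  have part1 : ∀ a b : ℝ, 0 ≤ a → a ≤ b → b < 1 →
      kappaAlpha G a x y / (1 - a) ≤ kappaAlpha G b x y / (1 - b) := by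
    intro a b h0 hab hb1
    have ha1 : a < 1 := lt_of_le_of_lt hab hb1
    have hW := wass_mono G hconn hcard h0 hab hb1 x y
    set c : ℝ := (1 - b) / (1 - a) with hcdef
    have hc0 : 0 < c := div_pos (by linarith) (by linarith)
    have hc : c * (1 - a) = 1 - b := div_mul_cancel₀ _ (by linarith : (1:ℝ) - a ≠ 0)
    set Wa := Wass G (mMeas G a x) (mMeas G a y) with hWa
    set Wb := Wass G (mMeas G b x) (mMeas G b y) with hWb
    unfold kappaAlpha
    rw [← hWa, ← hWb, div_le_div_iff₀ (by linarith) (by linarith)]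
    set A := Wa / (G.dist x y : ℝ) with hA
    set B := Wb / (G.dist x y : ℝ) with hB
    have hBle : B ≤ c * A + (1 - c) := by
      rw [hB, div_le_iff₀ hdR]
      have heq : (c * A + (1 - c)) * (G.dist x y : ℝ)
          = c * Wa + (1 - c) * (G.dist x y : ℝ) := by
        rw [hA]
        field_simp
      rw [heq]
      exact hW
    have h5 : B * (1 - a) ≤ (c * A + (1 - c)) * (1 - a) :=
      mul_le_mul_of_nonneg_right hBle (by linarith)
    have h6 : (c * A + (1 - c)) * (1 - a) = A * (1 - b) + ((1 - a) - (1 - b)) := by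
      linear_combination (A - 1) * hc
    nlinarith [h5, h6]
  have part2 : ∀ a : ℝ, 0 ≤ a → a < 1 →
      kappaAlpha G a x y / (1 - a) ≤ 2 / (G.dist x y : ℝ) := by
    intro a h0 ha1
    have hlb := wass_lb G hconn hcard h0 ha1.le x y
    unfold kappaAlpha
    rw [div_le_div_iff₀ (by linarith) hdR]
    have hcan : Wass G (mMeas G a x) (mMeas G a y) / (G.dist x y : ℝ) * (G.dist x y : ℝ)
        = Wass G (mMeas G a x) (mMeas G a y) := div_mul_cancel₀ _ hdR.ne'
    nlinarith [hlb, hcan]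
  refine ⟨part1, part2, ?_⟩
  have hne : (Set.Ioo (0:ℝ) 1).Nonempty := ⟨1/2, by norm_num, by norm_num⟩
  have hmono : MonotoneOn (fun a => kappaAlpha G a x y / (1 - a)) (Set.Ioo 0 1) :=
    fun a ha b hb hab => part1 a b ha.1.le hab hb.2
  have hbdd : BddAbove ((fun a => kappaAlpha G a x y / (1 - a)) '' Set.Ioo 0 1) := by
    refine ⟨2 / (G.dist x y : ℝ), ?_⟩
    rintro _ ⟨a, ha, rfl⟩
    exact part2 a ha.1.le ha.2
  refine ⟨_, MonotoneOn.tendsto_nhdsWithin_Ioo_left hne hmono hbdd, ?_⟩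
  refine csSup_le (hne.image _) ?_
  rintro _ ⟨a, ha, rfl⟩
  exact part2 a ha.1.le ha.2
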